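/- Let V ⊆ ℂⁿ be open, Φ : V → ℝ continuous, Ψ̃ : V × V → ℂ continuous, C₀ > 0 and M > 0. Assume Re Ψ̃(y,y) = Φ(y) for all y ∈ V and 2 Re Ψ̃(x,y) ≤ Φ(x) + Φ(y) − (1/C₀)|x−y|² for all x, y ∈ V. Let b : V × V → ℂ be measurable with |b| ≤ M, and for h > 0 and measurable u define Π̃u(x) := h^{−n} ∫_V e^{(2/h)(Ψ̃(x,y) − Ψ̃(y,y))} b(x,y) u(y) dL(y). Then there exists C₁ > 0, depending only on n, C₀ and M, such that for every h ∈ (0,1] and every measurable u : V → ℂ with ‖u‖_{L²_Φ(V)} < ∞, the integral defining Π̃u(x) converges absolutely for almost every x ∈ V and ‖Π̃u‖_{L²_Φ(V)} ≤ C₁ ‖u‖_{L²_Φ(V)}. -/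

import Mathlib

open Complex MeasureTheory
open scoped ENNReal

noncomputable section

/-- `ℂⁿ` with its Euclidean (Hermitian) norm. -/
abbrev En (n : ℕ) := EuclideanSpace ℂ (Fin n)

instance (n : ℕ) : MeasurableSpace (En n) := borel _
instance (n : ℕ) : BorelSpace (En n) := ⟨rfl⟩
/-- The real inner product structure, giving Lebesgue measure (`volume`) on `ℂⁿ ≅ ℝ^{2n}`. -/
instance (n : ℕ) : InnerProductSpace ℝ (En n) := InnerProductSpace.rclikeToReal ℂ (En n)

/-- The (possibly infinite) weighted `L²` norm `‖u‖_{L²_Φ(V)}`. -/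
def wNormE (n : ℕ) (V : Set (En n)) (Φ : En n → ℝ) (h : ℝ) (u : En n → ℂ) : ENNReal :=
  (∫⁻ x in V, ENNReal.ofReal (‖u x‖ ^ 2 * Real.exp (-(2 * Φ x) / h))) ^ (1/2 : ℝ)

/-- The Bergman-type operator
`Π̃u(x) = h^{−n} ∫_V e^{(2/h)(Ψ̃(x,y) − Ψ̃(y,y))} b(x,y) u(y) dL(y)`. -/
def PiOp (n : ℕ) (V : Set (En n)) (Ψt b : En n → En n → ℂ) (h : ℝ)
    (u : En n → ℂ) (x : En n) : ℂ :=
  ((h ^ n : ℝ) : ℂ)⁻¹ *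
    ∫ y in V, Complex.exp (((2 / h : ℝ) : ℂ) * (Ψt x y - Ψt y y)) * b x y * u y

lemma gauss_integrable (n : ℕ) {c : ℝ} (hc : 0 < c) :
    Integrable (fun v : En n => Real.exp (-c * ‖v‖ ^ 2)) := by
  have h0 := GaussianFourier.integrable_cexp_neg_mul_sq_norm_add (V := En n)
    (b := (c : ℂ)) (by simpa using hc) 0 0
  have h2 : Integrable (fun v : En n => Complex.exp (-(c : ℂ) * ‖v‖ ^ 2)) := by simpa using h0
  refine h2.re.congr (Filter.Eventually.of_forall fun v => ?_)
  have : (-(c:ℂ) * (‖v‖:ℂ) ^ 2) = ((-c * ‖v‖ ^ 2 : ℝ) : ℂ) := by push_cast; ring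
  simp only [this, ← Complex.ofReal_exp, RCLike.re_to_complex, Complex.ofReal_re]

lemma gauss_bound (n : ℕ) {c : ℝ} (hc : 0 < c) (V : Set (En n)) (y : En n) :
    ∫⁻ x in V, ENNReal.ofReal (Real.exp (-c * ‖x - y‖ ^ 2)) ≤
      ENNReal.ofReal ((Real.pi / c) ^ (n : ℝ)) := by
  calc ∫⁻ x in V, ENNReal.ofReal (Real.exp (-c * ‖x - y‖ ^ 2))
      ≤ ∫⁻ x, ENNReal.ofReal (Real.exp (-c * ‖x - y‖ ^ 2)) := setLIntegral_le_lintegral _ _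
    _ = ∫⁻ x, ENNReal.ofReal (Real.exp (-c * ‖x‖ ^ 2)) := by
        rw [← lintegral_sub_right_eq_self (fun x => ENNReal.ofReal (Real.exp (-c * ‖x‖ ^ 2))) y]
    _ = ENNReal.ofReal (∫ x : En n, Real.exp (-c * ‖x‖ ^ 2)) := by
        rw [← ofReal_integral_eq_lintegral_ofReal (gauss_integrable n hc)]
        exact Filter.Eventually.of_forall fun x => (Real.exp_pos _).le
    _ = ENNReal.ofReal ((Real.pi / c) ^ (n : ℝ)) := by
        rw [GaussianFourier.integral_rexp_neg_mul_sq_norm hc]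
        rw [show Module.finrank ℝ (En n) = 2 * n by
          rw [← Module.finrank_mul_finrank ℝ ℂ (En n), Complex.finrank_real_complex,
            finrank_euclideanSpace, Fintype.card_fin]]
        norm_num

/-- boundedness of the Bergman-type operator `Π̃` on `L²_Φ(V)` (Schur test). -/
theorem statement11 (n : ℕ)
    (V : Set (En n)) (hV : IsOpen V)
    (Φ : En n → ℝ) (hΦ : ContinuousOn Φ V)
    (Ψt : En n → En n → ℂ)
    (hΨt : ContinuousOn (fun p : En n × En n => Ψt p.1 p.2) (V ×ˢ V))
    (C₀ M : ℝ) (hC₀ : 0 < C₀) (hM : 0 < M)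
    (hdiag : ∀ y ∈ V, (Ψt y y).re = Φ y)
    (hub : ∀ x ∈ V, ∀ y ∈ V, 2 * (Ψt x y).re ≤ Φ x + Φ y - (1/C₀) * ‖x - y‖ ^ 2)
    (b : En n → En n → ℂ) (hb : Measurable fun p : En n × En n => b p.1 p.2)
    (hbM : ∀ x ∈ V, ∀ y ∈ V, ‖b x y‖ ≤ M) :
    ∃ C₁ : ℝ, 0 < C₁ ∧ ∀ h ∈ Set.Ioc (0:ℝ) 1, ∀ u : En n → ℂ, Measurable u →
      wNormE n V Φ h u < ⊤ →
      (∀ᵐ x ∂(volume.restrict V),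
        Integrable (fun y => Complex.exp (((2 / h : ℝ) : ℂ) * (Ψt x y - Ψt y y)) * b x y * u y)
          (volume.restrict V)) ∧
      wNormE n V Φ h (PiOp n V Ψt b h u) ≤ ENNReal.ofReal C₁ * wNormE n V Φ h u := by
  refine ⟨M * (Real.pi * C₀) ^ n, by positivity, ?_⟩
  rintro h ⟨h0, h1⟩ u hu hfin
  have hMV : MeasurableSet V := hV.measurableSet
  set μ : Measure (En n) := volume.restrict V with hμdef
  set c : ℝ := 1 / (C₀ * h) with hcdef
  have hc0 : 0 < c := by positivity
  set A : ℝ := M * (Real.pi / c) ^ (n : ℝ) with hAdef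
  have hA0 : 0 < A := by positivity
  -- measurable modification of Φ
  have hΦae : AEMeasurable Φ μ := hΦ.aemeasurable hMV
  set Φ' : En n → ℝ := hΦae.mk Φ with hΦ'def
  have hΦ'm : Measurable Φ' := hΦae.measurable_mk
  have hΦeq : Φ =ᵐ[μ] Φ' := hΦae.ae_eq_mk
  -- kernel and weighted function
  set k : En n → En n → ℝ≥0∞ :=
    fun x y => ENNReal.ofReal (M * Real.exp (-c * ‖x - y‖ ^ 2)) with hkdef
  set f : En n → ℝ≥0∞ :=
    fun y => ENNReal.ofReal (‖u y‖ * Real.exp (-(Φ' y) / h)) with hfdef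
  have hkm : Measurable fun p : En n × En n => k p.1 p.2 := by
    have : Continuous fun p : En n × En n => M * Real.exp (-c * ‖p.1 - p.2‖ ^ 2) := by
      fun_prop
    exact (ENNReal.continuous_ofReal.comp this).measurable
  have hfm : Measurable f := by
    apply Measurable.ennreal_ofReal
    exact hu.norm.mul ((hΦ'm.neg.div_const h).exp)
  have hfnetop : ∀ y, f y ≠ ⊤ := fun y => ENNReal.ofReal_ne_top
  -- kernel bounds (Schur test input)
  have hky : ∀ x, ∫⁻ y in V, k x y ≤ ENNReal.ofReal A := by
    intro x
    have : ∀ y, k x y = ENNReal.ofReal M * ENNReal.ofReal (Real.exp (-c * ‖y - x‖ ^ 2)) := by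
      intro y
      rw [hkdef, ← ENNReal.ofReal_mul hM.le, norm_sub_rev]
    simp_rw [this]
    rw [lintegral_const_mul' _ _ ENNReal.ofReal_ne_top]
    calc ENNReal.ofReal M * ∫⁻ y in V, ENNReal.ofReal (Real.exp (-c * ‖y - x‖ ^ 2))
        ≤ ENNReal.ofReal M * ENNReal.ofReal ((Real.pi / c) ^ (n : ℝ)) :=
          mul_le_mul_right (gauss_bound n hc0 V x) _
      _ = ENNReal.ofReal A := by rw [← ENNReal.ofReal_mul hM.le, hAdef]
  have hkx : ∀ y, ∫⁻ x in V, k x y ≤ ENNReal.ofReal A := by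
    intro y
    have : ∀ x, k x y = ENNReal.ofReal M * ENNReal.ofReal (Real.exp (-c * ‖x - y‖ ^ 2)) := by
      intro x
      rw [hkdef, ← ENNReal.ofReal_mul hM.le]
    simp_rw [this]
    rw [lintegral_const_mul' _ _ ENNReal.ofReal_ne_top]
    calc ENNReal.ofReal M * ∫⁻ x in V, ENNReal.ofReal (Real.exp (-c * ‖x - y‖ ^ 2))
        ≤ ENNReal.ofReal M * ENNReal.ofReal ((Real.pi / c) ^ (n : ℝ)) :=
          mul_le_mul_right (gauss_bound n hc0 V y) _
      _ = ENNReal.ofReal A := by rw [← ENNReal.ofReal_mul hM.le, hAdef]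
  -- main objects
  set T : En n → ℝ≥0∞ := fun x => ∫⁻ y, k x y * f y ∂μ with hTdef
  set W : En n → ℝ≥0∞ := fun x => ∫⁻ y, k x y * (f y) ^ 2 ∂μ with hWdef
  set N2 : ℝ≥0∞ := ∫⁻ y, (f y) ^ 2 ∂μ with hN2def
  have hTm : Measurable T :=
    Measurable.lintegral_prod_right' (f := fun p : En n × En n => k p.1 p.2 * f p.2)
      (hkm.mul (hfm.comp measurable_snd))
  have hWm : Measurable W :=
    Measurable.lintegral_prod_right' (f := fun p : En n × En n => k p.1 p.2 * (f p.2) ^ 2)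
      (hkm.mul ((hfm.comp measurable_snd).pow_const 2))
  -- relation of N2 with wNormE u
  have hN2eq : ∫⁻ x in V, ENNReal.ofReal (‖u x‖ ^ 2 * Real.exp (-(2 * Φ x) / h)) = N2 := by
    rw [hN2def]
    apply lintegral_congr_ae
    filter_upwards [hΦeq] with x hx
    rw [hfdef]
    rw [← ENNReal.ofReal_pow (by positivity)]
    congr 1
    rw [mul_pow, ← Real.exp_nat_mul]
    rw [hx]
    ring_nf
  have hwu : wNormE n V Φ h u = N2 ^ (1/2 : ℝ) := by
    rw [wNormE, hN2eq]
  have hN2top : N2 ≠ ⊤ := by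
    intro hcon
    rw [hwu, hcon] at hfin
    simp [ENNReal.top_rpow_of_pos (by norm_num : (0:ℝ) < 1/2)] at hfin
  -- Cauchy–Schwarz: T x ^ 2 ≤ A * W x
  have hCS : ∀ x, (T x) ^ 2 ≤ ENNReal.ofReal A * W x := by
    intro x
    have hpq : Real.HolderConjugate 2 2 := Real.HolderConjugate.two_two
    have hH := ENNReal.lintegral_mul_le_Lp_mul_Lq μ hpq
      (f := fun y => (k x y) ^ (1/2 : ℝ)) (g := fun y => (k x y) ^ (1/2 : ℝ) * f y)
      (((hkm.comp (measurable_prodMk_left)).pow_const _).aemeasurable)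
      ((((hkm.comp (measurable_prodMk_left)).pow_const _).mul hfm).aemeasurable)
    have hTeq : T x = ∫⁻ y, ((fun y => (k x y) ^ (1/2 : ℝ)) *
        fun y => (k x y) ^ (1/2 : ℝ) * f y) y ∂μ := by
      rw [hTdef]
      apply lintegral_congr
      intro y
      simp only [Pi.mul_apply]
      rw [← mul_assoc, ← ENNReal.rpow_add_of_nonneg _ _ (by norm_num) (by norm_num)]
      norm_num
    have h2 : ∫⁻ y, ((k x y) ^ (1/2 : ℝ)) ^ (2:ℝ) ∂μ = ∫⁻ y, k x y ∂μ := by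
      apply lintegral_congr; intro y
      rw [← ENNReal.rpow_mul]; norm_num
    have h3 : ∫⁻ y, ((k x y) ^ (1/2 : ℝ) * f y) ^ (2:ℝ) ∂μ = W x := by
      rw [hWdef]
      apply lintegral_congr; intro y
      rw [ENNReal.mul_rpow_of_nonneg _ _ (by norm_num), ← ENNReal.rpow_mul]
      norm_num
    rw [hTeq] at *
    have hT12 : (∫⁻ y, ((fun y => (k x y) ^ (1/2 : ℝ)) *
        fun y => (k x y) ^ (1/2 : ℝ) * f y) y ∂μ) ≤
        (ENNReal.ofReal A) ^ (1/2:ℝ) * (W x) ^ (1/2:ℝ) := by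
      refine hH.trans ?_
      rw [h2, h3]
      exact mul_le_mul_left (ENNReal.rpow_le_rpow (hky x) (by norm_num)) _
    calc (∫⁻ y, ((fun y => (k x y) ^ (1/2 : ℝ)) * fun y => (k x y) ^ (1/2 : ℝ) * f y) y ∂μ) ^ 2
        ≤ ((ENNReal.ofReal A) ^ (1/2:ℝ) * (W x) ^ (1/2:ℝ)) ^ 2 := pow_le_pow_left' hT12 2
      _ = ENNReal.ofReal A * W x := by
          rw [mul_pow, ← ENNReal.rpow_natCast (_ ^ (1/2:ℝ)) 2, ← ENNReal.rpow_natCast (_ ^ (1/2:ℝ)) 2,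
            ← ENNReal.rpow_mul, ← ENNReal.rpow_mul]
          norm_num
  -- Tonelli
  have hWint : ∫⁻ x, W x ∂μ ≤ ENNReal.ofReal A * N2 := by
    have hunc : AEMeasurable (Function.uncurry fun x y => k x y * (f y) ^ 2) (μ.prod μ) :=
      (hkm.mul ((hfm.comp measurable_snd).pow_const 2)).aemeasurable
    have hswap : ∫⁻ x, W x ∂μ = ∫⁻ y, ∫⁻ x, k x y * (f y) ^ 2 ∂μ ∂μ :=
      lintegral_lintegral_swap hunc
    rw [hswap, hN2def]
    rw [← lintegral_const_mul' _ _ ENNReal.ofReal_ne_top]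
    refine lintegral_mono fun y => ?_
    calc ∫⁻ x, k x y * f y ^ 2 ∂μ
        = (∫⁻ x, k x y ∂μ) * f y ^ 2 :=
          lintegral_mul_const' _ _ (ENNReal.pow_ne_top (hfnetop y))
      _ ≤ ENNReal.ofReal A * f y ^ 2 := mul_le_mul_left (hkx y) _
  have hS : ∫⁻ x, (T x) ^ 2 ∂μ ≤ ENNReal.ofReal A * (ENNReal.ofReal A * N2) := by
    calc ∫⁻ x, (T x) ^ 2 ∂μ ≤ ∫⁻ x, ENNReal.ofReal A * W x ∂μ := lintegral_mono hCS
      _ = ENNReal.ofReal A * ∫⁻ x, W x ∂μ := lintegral_const_mul' _ _ ENNReal.ofReal_ne_top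
      _ ≤ ENNReal.ofReal A * (ENNReal.ofReal A * N2) := mul_le_mul_right hWint _
  have hSlt : ∫⁻ x, (T x) ^ 2 ∂μ < ⊤ :=
    lt_of_le_of_lt hS (ENNReal.mul_lt_top ENNReal.ofReal_lt_top
      (ENNReal.mul_lt_top ENNReal.ofReal_lt_top hN2top.lt_top))
  have hTae : ∀ᵐ x ∂μ, T x < ⊤ := by
    filter_upwards [ae_lt_top (hTm.pow_const 2) hSlt.ne] with x hx
    by_contra hcon
    push_neg at hcon
    rw [top_le_iff] at hcon
    rw [hcon, pow_two, ENNReal.top_mul_top] at hx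
    exact lt_irrefl _ hx
  -- pointwise bound on the integrand
  have hptb : ∀ x ∈ V, ∀ y ∈ V, Φ y = Φ' y →
      (‖Complex.exp (((2 / h : ℝ) : ℂ) * (Ψt x y - Ψt y y)) * b x y * u y‖₊ : ℝ≥0∞) ≤
        ENNReal.ofReal (Real.exp (Φ x / h)) * (k x y * f y) := by
    intro x hx y hy hΦy
    simp only [hkdef, hfdef]
    rw [← ENNReal.ofReal_mul (by positivity : (0:ℝ) ≤ M * Real.exp (-c * ‖x - y‖ ^ 2)),
      ← ENNReal.ofReal_mul (Real.exp_pos _).le, ← enorm_eq_nnnorm, ← ofReal_norm_eq_enorm]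
    apply ENNReal.ofReal_le_ofReal
    have hnexp : ‖Complex.exp (((2 / h : ℝ) : ℂ) * (Ψt x y - Ψt y y))‖ =
        Real.exp ((2 / h) * ((Ψt x y).re - (Ψt y y).re)) := by
      rw [Complex.norm_exp, Complex.re_ofReal_mul, Complex.sub_re]
    have hkey : (2 / h) * ((Ψt x y).re - (Ψt y y).re) ≤
        Φ x / h + (-c * ‖x - y‖ ^ 2 + -(Φ' y) / h) := by
      rw [hdiag y hy, ← hΦy, hcdef]
      have h2 := hub x hx y hy
      have e1 : (2 / h) * ((Ψt x y).re - Φ y) = (2 * (Ψt x y).re - 2 * Φ y) / h := by ring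
      have e2 : Φ x / h + (-(1 / (C₀ * h)) * ‖x - y‖ ^ 2 + -(Φ y) / h) =
          (Φ x + Φ y - (1 / C₀) * ‖x - y‖ ^ 2 - 2 * Φ y) / h := by
        field_simp
        ring
      rw [e1, e2]
      exact (div_le_div_iff_of_pos_right h0).mpr (by linarith)
    calc ‖Complex.exp (((2 / h : ℝ) : ℂ) * (Ψt x y - Ψt y y)) * b x y * u y‖
        = ‖Complex.exp (((2 / h : ℝ) : ℂ) * (Ψt x y - Ψt y y))‖ * ‖b x y‖ * ‖u y‖ := by
          rw [norm_mul, norm_mul]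
      _ ≤ Real.exp (Φ x / h + (-c * ‖x - y‖ ^ 2 + -(Φ' y) / h)) * M * ‖u y‖ := by
          apply mul_le_mul_of_nonneg_right _ (norm_nonneg _)
          apply mul_le_mul _ (hbM x hx y hy) (norm_nonneg _) (Real.exp_pos _).le
          rw [hnexp]
          exact Real.exp_le_exp.mpr hkey
      _ = Real.exp (Φ x / h) *
          (M * Real.exp (-c * ‖x - y‖ ^ 2) * (‖u y‖ * Real.exp (-(Φ' y) / h))) := by
          rw [Real.exp_add, Real.exp_add]
          ring
  -- a.e. bound on the lintegral of the integrand
  have hlin : ∀ x ∈ V,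
      ∫⁻ y, (‖Complex.exp (((2 / h : ℝ) : ℂ) * (Ψt x y - Ψt y y)) * b x y * u y‖₊ : ℝ≥0∞) ∂μ ≤
        ENNReal.ofReal (Real.exp (Φ x / h)) * T x := by
    intro x hx
    have hmono : ∀ᵐ y ∂μ,
        (‖Complex.exp (((2 / h : ℝ) : ℂ) * (Ψt x y - Ψt y y)) * b x y * u y‖₊ : ℝ≥0∞) ≤
          ENNReal.ofReal (Real.exp (Φ x / h)) * (k x y * f y) := by
      filter_upwards [ae_restrict_mem hMV, hΦeq] with y hy hΦy
      exact hptb x hx y hy hΦy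
    calc ∫⁻ y, (‖Complex.exp (((2 / h : ℝ) : ℂ) * (Ψt x y - Ψt y y)) * b x y * u y‖₊ : ℝ≥0∞) ∂μ
        ≤ ∫⁻ y, ENNReal.ofReal (Real.exp (Φ x / h)) * (k x y * f y) ∂μ := lintegral_mono_ae hmono
      _ = ENNReal.ofReal (Real.exp (Φ x / h)) * T x :=
          lintegral_const_mul' _ _ ENNReal.ofReal_ne_top
  -- a.e. strong measurability
  have hsm : ∀ x ∈ V, AEStronglyMeasurable
      (fun y => Complex.exp (((2 / h : ℝ) : ℂ) * (Ψt x y - Ψt y y)) * b x y * u y) μ := by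
    intro x hx
    have c1 : ContinuousOn (fun y => Ψt x y) V := by
      have hpair : ContinuousOn (fun y : En n => ((x, y) : En n × En n)) V :=
        (continuous_const.prodMk continuous_id).continuousOn
      exact hΨt.comp hpair (fun y hy => Set.mk_mem_prod hx hy)
    have c2 : ContinuousOn (fun y => Ψt y y) V := by
      have hpair : ContinuousOn (fun y : En n => ((y, y) : En n × En n)) V :=
        (continuous_id.prodMk continuous_id).continuousOn
      exact hΨt.comp hpair (fun y hy => Set.mk_mem_prod hy hy)
    have cexp1 : ContinuousOn
        (fun y => Complex.exp (((2 / h : ℝ) : ℂ) * (Ψt x y - Ψt y y))) V :=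
      Complex.continuous_exp.comp_continuousOn (continuousOn_const.mul (c1.sub c2))
    exact ((cexp1.aestronglyMeasurable hMV).mul
      ((hb.comp measurable_prodMk_left).aestronglyMeasurable)).mul hu.aestronglyMeasurable
  -- first conjunct
  have hint : ∀ᵐ x ∂μ, Integrable
      (fun y => Complex.exp (((2 / h : ℝ) : ℂ) * (Ψt x y - Ψt y y)) * b x y * u y) μ := by
    filter_upwards [ae_restrict_mem hMV, hTae] with x hx hTx
    refine ⟨hsm x hx, ?_⟩
    rw [hasFiniteIntegral_def]
    exact lt_of_le_of_lt (hlin x hx)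
      (ENNReal.mul_lt_top ENNReal.ofReal_lt_top hTx)
  refine ⟨hint, ?_⟩
  -- pointwise bound for the output
  set D : ℝ≥0∞ := ENNReal.ofReal ((h ^ n)⁻¹) with hDdef
  have hDtop : D ≠ ⊤ := ENNReal.ofReal_ne_top
  have hPpt : ∀ᵐ x ∂μ, ENNReal.ofReal
      (‖PiOp n V Ψt b h u x‖ ^ 2 * Real.exp (-(2 * Φ x) / h)) ≤ (D * T x) ^ 2 := by
    filter_upwards [ae_restrict_mem hMV] with x hx
    have e1 : ENNReal.ofReal (‖PiOp n V Ψt b h u x‖ ^ 2 * Real.exp (-(2 * Φ x) / h)) =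
        (ENNReal.ofReal (‖PiOp n V Ψt b h u x‖ * Real.exp (-(Φ x) / h))) ^ 2 := by
      rw [← ENNReal.ofReal_pow (by positivity)]
      congr 1
      rw [mul_pow, ← Real.exp_nat_mul]
      ring_nf
    rw [e1]
    apply pow_le_pow_left' _ 2
    rw [ENNReal.ofReal_mul (norm_nonneg _)]
    have e2 : ENNReal.ofReal ‖PiOp n V Ψt b h u x‖ ≤
        D * (ENNReal.ofReal (Real.exp (Φ x / h)) * T x) := by
      rw [PiOp, norm_mul, ENNReal.ofReal_mul (norm_nonneg _)]
      have eD : ENNReal.ofReal ‖((h ^ n : ℝ) : ℂ)⁻¹‖ = D := by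
        rw [norm_inv, Complex.norm_real, Real.norm_eq_abs, abs_of_pos (by positivity), hDdef]
      rw [eD]
      apply mul_le_mul_right
      rw [ofReal_norm_eq_enorm]
      exact le_trans (enorm_integral_le_lintegral_enorm _) (hlin x hx)
    calc ENNReal.ofReal ‖PiOp n V Ψt b h u x‖ * ENNReal.ofReal (Real.exp (-(Φ x) / h))
        ≤ D * (ENNReal.ofReal (Real.exp (Φ x / h)) * T x) *
            ENNReal.ofReal (Real.exp (-(Φ x) / h)) := mul_le_mul_left e2 _
      _ = D * T x * (ENNReal.ofReal (Real.exp (Φ x / h)) *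
            ENNReal.ofReal (Real.exp (-(Φ x) / h))) := by ring
      _ = D * T x := by
          rw [← ENNReal.ofReal_mul (Real.exp_pos _).le, ← Real.exp_add, neg_div,
            add_neg_cancel, Real.exp_zero, ENNReal.ofReal_one, mul_one]
  -- final estimate
  calc wNormE n V Φ h (PiOp n V Ψt b h u)
      = (∫⁻ x, ENNReal.ofReal
          (‖PiOp n V Ψt b h u x‖ ^ 2 * Real.exp (-(2 * Φ x) / h)) ∂μ) ^ (1/2 : ℝ) := rfl
    _ ≤ (∫⁻ x, (D * T x) ^ 2 ∂μ) ^ (1/2 : ℝ) :=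
        ENNReal.rpow_le_rpow (lintegral_mono_ae hPpt) (by norm_num)
    _ = (D ^ 2 * ∫⁻ x, (T x) ^ 2 ∂μ) ^ (1/2 : ℝ) := by
        rw [← lintegral_const_mul' _ _ (ENNReal.pow_ne_top hDtop)]
        congr 1
        exact lintegral_congr fun x => mul_pow _ _ _
    _ ≤ (D ^ 2 * (ENNReal.ofReal A * (ENNReal.ofReal A * N2))) ^ (1/2 : ℝ) :=
        ENNReal.rpow_le_rpow (mul_le_mul_right hS _) (by norm_num)
    _ = ((D * ENNReal.ofReal A) ^ 2 * N2) ^ (1/2 : ℝ) := by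
        congr 1
        ring
    _ = (D * ENNReal.ofReal A) * N2 ^ (1/2 : ℝ) := by
        rw [ENNReal.mul_rpow_of_nonneg _ _ (by norm_num : (0:ℝ) ≤ 1/2),
          ← ENNReal.rpow_natCast (D * ENNReal.ofReal A) 2, ← ENNReal.rpow_mul]
        norm_num
    _ = ENNReal.ofReal (M * (Real.pi * C₀) ^ n) * N2 ^ (1/2 : ℝ) := by
        rw [hDdef, ← ENNReal.ofReal_mul (by positivity)]
        congr 1
        rw [hAdef, hcdef]
        rw [show Real.pi / (1 / (C₀ * h)) = Real.pi * (C₀ * h) by field_simp]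
        rw [Real.rpow_natCast]
        have hhn : (0:ℝ) < h ^ n := by positivity
        field_simp
        ring_nf
        rw [mul_assoc (M * Real.pi ^ n * C₀ ^ n), ← mul_pow h h⁻¹ n, mul_inv_cancel₀ h0.ne', one_pow, mul_one]
    _ = ENNReal.ofReal (M * (Real.pi * C₀) ^ n) * wNormE n V Φ h u := by rw [hwu]

end
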